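/- Marginal contribution lemma for PAV: let N = {1,…,n} be voters with approval ballots A_i ⊆ C over a finite candidate set C, and let W ⊆ C be any set of candidates with |W| = k > 0. Define the PAV score PAV(W) = Σ_{i∈N} r(|W ∩ A_i|) where r(j) = Σ_{p=1}^{j} 1/p (and r(0) = 0), and define the marginal contribution of c ∈ W as MC(c, W) = PAV(W) − PAV(W \ {c}). Then there exists at least one c ∈ W such that MC(c, W) ≤ |{i ∈ N : A_i ∩ W ≠ ∅}| / k ≤ n/k. -/

import Mathlib

open Finset

/-- Span-wise justified representation: every group of voters `X` with
`|X| ≥ n/k` and a commonly approved candidate has some approved candidate in `W`. -/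
def SWJR {α : Type*} [DecidableEq α] (n k : ℕ) (A : Fin n → Finset α)
    (W : Finset α) : Prop :=
  ∀ X : Finset (Fin n), (n : ℝ) / (k : ℝ) ≤ (X.card : ℝ) →
    (∃ c, ∀ i ∈ X, c ∈ A i) → (W ∩ X.biUnion A).Nonempty

/-- Weak span-wise justified representation: every group of voters `X` with
`|X| ≥ n/k` and a commonly approved candidate in *every* candidate subset `Cs j`
has some approved candidate in `W`. -/
def WeakSWJR {α : Type*} [DecidableEq α] (n ℓ k : ℕ) (Cs : Fin ℓ → Finset α)
    (A : Fin n → Finset α) (W : Finset α) : Prop :=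
  ∀ X : Finset (Fin n), (n : ℝ) / (k : ℝ) ≤ (X.card : ℝ) →
    (∀ j, ∃ c ∈ Cs j, ∀ i ∈ X, c ∈ A i) → (W ∩ X.biUnion A).Nonempty

/-- Intra-wise justified representation: for every subset `Cs j` (with quota `q j`),
every group of voters `X` with `|X| ≥ n/(q j)` and a commonly approved candidate in `Cs j`
has some approved candidate in `W ∩ Cs j`. -/
def IWJR {α : Type*} [DecidableEq α] (n ℓ : ℕ) (Cs : Fin ℓ → Finset α)
    (q : Fin ℓ → ℕ) (A : Fin n → Finset α) (W : Finset α) : Prop :=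
  ∀ j, ∀ X : Finset (Fin n), (n : ℝ) / (q j : ℝ) ≤ (X.card : ℝ) →
    (∃ c ∈ Cs j, ∀ i ∈ X, c ∈ A i) → ((W ∩ Cs j) ∩ X.biUnion A).Nonempty

/-- Justified representation in a single-committee approval voting instance
with committee size `κ` and ballots `B`. -/
def JR {α : Type*} [DecidableEq α] (n κ : ℕ) (B : Fin n → Finset α)
    (S : Finset α) : Prop :=
  ∀ X : Finset (Fin n), (n : ℝ) / (κ : ℝ) ≤ (X.card : ℝ) →
    (∃ c, ∀ i ∈ X, c ∈ B i) → (S ∩ X.biUnion B).Nonempty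

/-- `harmonicR j = 1 + 1/2 + ⋯ + 1/j`, with `harmonicR 0 = 0`. -/
noncomputable def harmonicR (j : ℕ) : ℝ := ∑ p ∈ Finset.range j, (1 : ℝ) / (p + 1)

/-- Span-wise PAV score of a committee `W`. -/
noncomputable def SWPAV {α : Type*} [DecidableEq α] (n : ℕ) (A : Fin n → Finset α)
    (W : Finset α) : ℝ :=
  ∑ i, harmonicR ((W ∩ A i).card)

/-- Intra-wise PAV score of a committee `W`. -/
noncomputable def IWPAV {α : Type*} [DecidableEq α] (n ℓ : ℕ) (Cs : Fin ℓ → Finset α)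
    (A : Fin n → Finset α) (W : Finset α) : ℝ :=
  ∑ j, ∑ i, harmonicR ((W ∩ A i ∩ Cs j).card)

/-- marginal contribution lemma for PAV: for any `W` with
`|W| = k > 0`, some `c ∈ W` has marginal contribution
`PAV(W) − PAV(W \ {c})` at most `|{i : A_i ∩ W ≠ ∅}| / k ≤ n/k`. -/
theorem stmt_10 {α : Type*} [DecidableEq α] (n : ℕ) (A : Fin n → Finset α)
    (W : Finset α) (k : ℕ) (hk : 0 < k) (hW : W.card = k) :
    ∃ c ∈ W,
      SWPAV n A W - SWPAV n A (W.erase c) ≤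
        ((Finset.univ.filter fun i : Fin n => (A i ∩ W).Nonempty).card : ℝ) / k ∧
      ((Finset.univ.filter fun i : Fin n => (A i ∩ W).Nonempty).card : ℝ) / k ≤
        (n : ℝ) / k := by
  classical
  set m : ℕ := (Finset.univ.filter fun i : Fin n => (A i ∩ W).Nonempty).card with hm
  have hWne : W.Nonempty := Finset.card_pos.mp (hW ▸ hk)
  have hMC : ∀ c ∈ W, SWPAV n A W - SWPAV n A (W.erase c)
      = ∑ i, (if c ∈ A i then 1 / ((W ∩ A i).card : ℝ) else 0) := by
    intro c hc
    unfold SWPAV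
    rw [← Finset.sum_sub_distrib]
    refine Finset.sum_congr rfl fun i _ => ?_
    have h1 : W.erase c ∩ A i = (W ∩ A i).erase c := Finset.erase_inter c W (A i)
    by_cases hca : c ∈ A i
    · have hmem : c ∈ W ∩ A i := Finset.mem_inter.mpr ⟨hc, hca⟩
      have hcardpos : 0 < (W ∩ A i).card := Finset.card_pos.mpr ⟨c, hmem⟩
      rw [h1, Finset.card_erase_of_mem hmem, if_pos hca]
      obtain ⟨j, hj⟩ : ∃ j, (W ∩ A i).card = j + 1 :=
        ⟨_, (Nat.succ_pred_eq_of_pos hcardpos).symm⟩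
      rw [hj]
      simp [harmonicR, Finset.sum_range_succ]
    · rw [h1, Finset.erase_eq_of_notMem (fun h => hca (Finset.mem_inter.mp h).2),
        if_neg hca, sub_self]
  have hsum : ∑ c ∈ W, (SWPAV n A W - SWPAV n A (W.erase c)) = (m : ℝ) := by
    rw [Finset.sum_congr rfl hMC, Finset.sum_comm, hm, Finset.card_filter]
    push_cast
    refine Finset.sum_congr rfl fun i _ => ?_
    have : ∑ c ∈ W, (if c ∈ A i then 1 / ((W ∩ A i).card : ℝ) else 0)
        = ∑ c ∈ W ∩ A i, 1 / ((W ∩ A i).card : ℝ) := by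
      rw [Finset.sum_ite_mem W (A i) (fun _ => 1 / ((W ∩ A i).card : ℝ))]
    rw [this, Finset.sum_const, nsmul_eq_mul]
    by_cases hne : (W ∩ A i).Nonempty
    · have hpos : (0:ℝ) < ((W ∩ A i).card : ℝ) := by
        exact_mod_cast Finset.card_pos.mpr hne
      rw [if_pos (by rwa [Finset.inter_comm] at hne)]
      field_simp
    · rw [Finset.not_nonempty_iff_eq_empty.mp hne, if_neg]
      · simp
      · rw [Finset.inter_comm]
        simp [Finset.not_nonempty_iff_eq_empty.mp hne]
  have havg : ∃ c ∈ W, SWPAV n A W - SWPAV n A (W.erase c) ≤ (m : ℝ) / k := by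
    apply Finset.exists_le_of_sum_le hWne
    rw [hsum, Finset.sum_const, hW, nsmul_eq_mul]
    field_simp
    exact le_rfl
  obtain ⟨c, hc, hle⟩ := havg
  refine ⟨c, hc, hle, ?_⟩
  have hmn : (m : ℝ) ≤ n := by
    have := Finset.card_filter_le (Finset.univ : Finset (Fin n))
      (fun i => (A i ∩ W).Nonempty)
    simp only [Finset.card_univ, Fintype.card_fin] at this
    exact_mod_cast hm ▸ this
  gcongr
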